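/- With the notation in the context, for all strictly increasing lists of positive integers 𝐥 = (l_1,…,l_m) and 𝐪 = (q_1,…,q_n) (m, n ≥ 0, with l_m := 0 if m = 0) and every integer x ≥ 0, the following identity of rational numbers holds: P̄_{𝐥,𝐪}(x+1) · (2x+2l_m-m+n+1)! · (2x+2l_m-m+n+2)! · ∏_{i=1}^{m} (x+l_m-l_i+1) · ∏_{i=1}^{n} (x+l_m-q_i-m+n+1) = P̄_{𝐥,𝐪}(x) · (2x+2l_m+1)! · (2x+2l_m-2m+2n+2)! · ∏_{i=1}^{m} (x+l_m+l_i-m+n+1) · ∏_{i=1}^{n} (x+l_m+q_i+1). -/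

import Mathlib

open Finset

/-- The Pochhammer symbol `(a)_k = a(a+1)⋯(a+k-1)`, with `(a)_0 = 1`. -/
def pochQ (a : ℚ) (k : ℕ) : ℚ := ∏ i ∈ Finset.range k, (a + i)

/-- The product `⟨a, a+k⟩ = ∏_{i=0}^{⌊k/2⌋} (a+i)_{k+1-2i}` for `k ≥ 0`, and `1` for `k < 0`. -/
def angleQ (a : ℚ) (k : ℤ) : ℚ :=
  if k < 0 then 1
  else ∏ i ∈ Finset.range (k.toNat / 2 + 1), pochQ (a + i) (k.toNat + 1 - 2 * i)

/-- The monic polynomial `B̄_{m,n}(x)`. -/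
def polBbar (m n : ℕ) (x : ℚ) : ℚ :=
  ((2 : ℚ) ^ (m * n + n * (n + 1) / 2))⁻¹ *
    pochQ (x + m + 1) n *
    angleQ (x + 1) ((m : ℤ) - 1) * angleQ (x + 3 / 2) ((m : ℤ) - 2) *
    (∏ i ∈ Finset.Icc 1 m, pochQ (x + i) n / pochQ (x + i + 1 / 2) n) *
    ∏ i ∈ Finset.Icc 1 n, pochQ (2 * x + m + i + 1) (m + i)

/-- The constant `c̄_{𝐥,𝐪}` (here `𝐥` and `𝐪` are given as functions, the lists being
`l 1 < l 2 < ⋯ < l m` and `q 1 < q 2 < ⋯ < q n`). -/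
def constCbar (m n : ℕ) (l q : ℕ → ℕ) : ℚ :=
  (2 : ℚ) ^ ((((n : ℤ) - m) * ((n : ℤ) - m - 1)) / 2 - m) *
    (∏ i ∈ Finset.Icc 1 m, ((Nat.factorial (2 * l i - 1) : ℚ))⁻¹) *
    (∏ i ∈ Finset.Icc 1 n, ((Nat.factorial (2 * q i) : ℚ))⁻¹) *
    (∏ i ∈ Finset.Icc 1 m, ∏ j ∈ Finset.Icc (i + 1) m, ((l j : ℚ) - (l i : ℚ))) *
    (∏ i ∈ Finset.Icc 1 n, ∏ j ∈ Finset.Icc (i + 1) n, ((q j : ℚ) - (q i : ℚ))) /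
    (∏ i ∈ Finset.Icc 1 m, ∏ j ∈ Finset.Icc 1 n, ((l i : ℚ) + (q j : ℚ)))

/-- The polynomial `P̄_{𝐥,𝐪}(x)`; the parameter `lm` stands for `l_m` (which is `0` if `m = 0`). -/
def polPbar (m n : ℕ) (l q : ℕ → ℕ) (lm : ℕ) (x : ℚ) : ℚ :=
  constCbar m n l q * polBbar m n (x + lm - m) *
    (∏ i ∈ Finset.Icc 1 m, ∏ j ∈ Finset.Icc i (l i - 1),
      ((x + lm - j) * (x + lm - m + n + j + 1))) *
    ∏ i ∈ Finset.Icc 1 n, ∏ j ∈ Finset.Icc i (q i - 1),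
      ((x + lm - m + n - j) * (x + lm + j + 1))

lemma pochQ_zero (a : ℚ) : pochQ a 0 = 1 := by simp [pochQ]

lemma pochQ_succ (a : ℚ) (k : ℕ) : pochQ a (k+1) = pochQ a k * (a + k) := by
  simp [pochQ, Finset.prod_range_succ]

lemma pochQ_succ' (a : ℚ) (k : ℕ) : pochQ a (k+1) = a * pochQ (a+1) k := by
  rw [pochQ, Finset.prod_range_succ']
  have : ∀ i ∈ Finset.range k, (a + ((i+1 : ℕ):ℚ)) = ((a+1) + (i:ℚ)) := by
    intro i _; push_cast; ring
  rw [Finset.prod_congr rfl this]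
  rw [pochQ]
  push_cast
  ring

lemma pochQ_add (a : ℚ) (j k : ℕ) : pochQ a (j + k) = pochQ a j * pochQ (a + j) k := by
  rw [pochQ, Finset.prod_range_add]
  congr 1
  apply Finset.prod_congr rfl
  intro i _
  push_cast
  ring

lemma pochQ_pos {a : ℚ} (h : 0 < a) (k : ℕ) : 0 < pochQ a k := by
  apply Finset.prod_pos
  intro i _
  positivity

lemma pochQ_ratio (a : ℚ) (k : ℕ) : pochQ (a+1) k * a = pochQ a k * (a + k) := by
  have h1 := pochQ_succ a k
  have h2 := pochQ_succ' a k
  rw [h2] at h1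
  linarith [h1]

lemma fact_poch (N c : ℕ) : ((N + c).factorial : ℚ) = (N.factorial : ℚ) * pochQ ((N:ℚ)+1) c := by
  induction c with
  | zero => simp [pochQ_zero]
  | succ c ih =>
    have : N + (c+1) = (N + c) + 1 := by ring
    rw [this, Nat.factorial_succ, pochQ_succ]
    push_cast [ih]
    ring

lemma angleQ_neg (a : ℚ) {k : ℤ} (h : k < 0) : angleQ a k = 1 := by simp [angleQ, h]

lemma poch_Icc (a : ℚ) (m : ℕ) : ∏ i ∈ Finset.Icc 1 m, (a + (i:ℚ)) = pochQ (a+1) m := by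
  induction m with
  | zero => simp [pochQ_zero]
  | succ m ih =>
    rw [Finset.prod_Icc_succ_top (by omega : 1 ≤ m + 1), ih, pochQ_succ]
    push_cast
    ring

lemma poch_Icc_desc (b : ℚ) (m : ℕ) : ∏ i ∈ Finset.Icc 1 m, (b - (i:ℚ)) = pochQ (b - m) m := by
  induction m with
  | zero => simp [pochQ_zero]
  | succ m ih =>
    rw [Finset.prod_Icc_succ_top (by omega : 1 ≤ m + 1), ih, pochQ_succ' (b - ((m+1:ℕ):ℚ)) m]
    have e : b - ((m+1:ℕ):ℚ) + 1 = b - (m:ℚ) := by push_cast; ring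
    rw [e]
    push_cast
    ring

lemma tel_up (a : ℚ) (s t : ℕ) (hs : 1 ≤ s) (hst : s ≤ t) :
    (∏ j ∈ Finset.Icc s (t-1), (a + 1 + (j:ℚ))) * (a + s) =
    (∏ j ∈ Finset.Icc s (t-1), (a + (j:ℚ))) * (a + t) := by
  induction t, hst using Nat.le_induction with
  | base =>
    have : Finset.Icc s (s - 1) = ∅ := by
      apply Finset.Icc_eq_empty; omega
    simp [this]
  | succ t ht ih =>
    have h1 : t + 1 - 1 = t := by omega
    have h2 : t - 1 + 1 = t := by omega
    rw [h1]
    have key1 := Finset.prod_Icc_succ_top (by omega : s ≤ t - 1 + 1) (fun j => a + 1 + (j:ℚ))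
    have key2 := Finset.prod_Icc_succ_top (by omega : s ≤ t - 1 + 1) (fun j => a + (j:ℚ))
    rw [h2] at key1 key2
    rw [key1, key2]
    push_cast
    linear_combination (a + (t:ℚ) + 1) * ih

lemma tel_down (a : ℚ) (s t : ℕ) (hs : 1 ≤ s) (hst : s ≤ t) :
    (∏ j ∈ Finset.Icc s (t-1), (a + 1 - (j:ℚ))) * (a - t + 1) =
    (∏ j ∈ Finset.Icc s (t-1), (a - (j:ℚ))) * (a - s + 1) := by
  induction t, hst using Nat.le_induction with
  | base =>
    have : Finset.Icc s (s - 1) = ∅ := by apply Finset.Icc_eq_empty; omega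
    simp [this]
  | succ t ht ih =>
    have h1 : t + 1 - 1 = t := by omega
    have h2 : t - 1 + 1 = t := by omega
    rw [h1]
    have key1 := Finset.prod_Icc_succ_top (by omega : s ≤ t - 1 + 1) (fun j => a + 1 - (j:ℚ))
    have key2 := Finset.prod_Icc_succ_top (by omega : s ≤ t - 1 + 1) (fun j => a - (j:ℚ))
    rw [h2] at key1 key2
    rw [key1, key2]
    push_cast
    linear_combination (a - (t:ℚ)) * ih

lemma tel_ratio (h : ℕ → ℚ) (m : ℕ) :
    (∏ i ∈ Finset.Icc 1 m, h (i+1)) * h 1 = (∏ i ∈ Finset.Icc 1 m, h i) * h (m+1) := by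
  induction m with
  | zero => simp
  | succ m ih =>
    rw [Finset.prod_Icc_succ_top (by omega : 1 ≤ m + 1),
        Finset.prod_Icc_succ_top (by omega : 1 ≤ m + 1)]
    linear_combination h (m + 1 + 1) * ih

lemma angle_rec (a : ℚ) (k : ℤ) (hk : -2 ≤ k) :
    angleQ a (k+2) = pochQ a (k+3).toNat * angleQ (a+1) k := by
  rcases lt_or_ge k 0 with h | h
  · interval_cases k
    · norm_num [angleQ, pochQ]
    · rw [angleQ, angleQ, if_neg (by norm_num), if_pos (by norm_num)]
      norm_num [pochQ]
      rw [show Int.toNat 2 = 2 from rfl]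
  · obtain ⟨t, rfl⟩ : ∃ t : ℕ, k = (t:ℤ) := ⟨k.toNat, (Int.toNat_of_nonneg h).symm⟩
    have e1 : ((t:ℤ) + 2).toNat = t + 2 := by omega
    have e3 : ((t:ℤ) + 3).toNat = t + 3 := by omega
    rw [angleQ, angleQ, if_neg (by omega), if_neg (by omega), e1, e3, Int.toNat_natCast]
    have e2 : (t + 2) / 2 + 1 = (t / 2 + 1) + 1 := by omega
    rw [e2, Finset.prod_range_succ']
    have h0 : pochQ (a + ((0:ℕ):ℚ)) (t + 2 + 1 - 2 * 0) = pochQ a (t+3) := by norm_num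
    rw [h0, mul_comm]
    congr 1
    apply Finset.prod_congr rfl
    intro i _
    rw [show t + 2 + 1 - 2 * (i + 1) = t + 1 - 2 * i from by omega,
       show a + (((i+1:ℕ)):ℚ) = a + 1 + (i:ℚ) from by push_cast; ring]

lemma polBbar_zero (m : ℕ) (x : ℚ) :
    polBbar m 0 x = angleQ (x + 1) ((m : ℤ) - 1) * angleQ (x + 3 / 2) ((m : ℤ) - 2) := by
  simp [polBbar, pochQ_zero]

lemma polBbar_rec (m n : ℕ) (x : ℚ) :
    polBbar m (n+1) x = polBbar m n x * ((2:ℚ) ^ (m + n + 1))⁻¹ * (x + m + 1 + n) *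
      (∏ i ∈ Finset.Icc 1 m, ((x + i + n) / (x + i + n + 1/2))) *
      pochQ (2 * x + m + n + 2) (m + n + 1) := by
  rw [polBbar, polBbar]
  have hexp : m * (n+1) + (n+1) * (n+1+1) / 2 = (m * n + n * (n+1) / 2) + (m + n + 1) := by
    obtain ⟨r, hr⟩ := Nat.even_mul_succ_self n
    have hm : m * (n+1) = m * n + m := by ring
    have h2 : (n+1) * (n+1+1) = n * (n+1) + 2 * (n+1) := by ring
    omega
  rw [hexp, pow_add, mul_inv]
  have h1 : pochQ (x + m + 1) (n+1) = pochQ (x + m + 1) n * (x + m + 1 + n) := pochQ_succ _ _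
  have h2 : ∏ i ∈ Finset.Icc 1 m, pochQ (x + i) (n+1) / pochQ (x + i + 1/2) (n+1)
      = (∏ i ∈ Finset.Icc 1 m, pochQ (x + i) n / pochQ (x + i + 1/2) n) *
        (∏ i ∈ Finset.Icc 1 m, ((x + i + n) / (x + i + n + 1/2))) := by
    rw [← Finset.prod_mul_distrib]
    apply Finset.prod_congr rfl
    intro i _
    rw [pochQ_succ, pochQ_succ, div_mul_div_comm]
    ring_nf
  have h3 : ∏ i ∈ Finset.Icc 1 (n+1), pochQ (2 * x + m + i + 1) (m + i)
      = (∏ i ∈ Finset.Icc 1 n, pochQ (2 * x + m + i + 1) (m + i)) *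
        pochQ (2 * x + m + n + 2) (m + n + 1) := by
    rw [Finset.prod_Icc_succ_top (by omega : 1 ≤ n + 1)]
    congr 2
    push_cast
    ring
  rw [h1, h2, h3]
  ring

lemma angleQ_zero (a : ℚ) : angleQ a 0 = a := by
  rw [angleQ, if_neg (by norm_num)]
  norm_num [pochQ]

lemma pochQ_two (a : ℚ) : pochQ a 2 = a * (a+1) := by
  simp [pochQ, Finset.prod_range_succ]

lemma KL0 : ∀ m : ℕ, ∀ Y : ℚ, 0 ≤ Y →
    polBbar m 0 (Y+1) * pochQ (2*Y+1) (m+1) * pochQ (2*Y+1) (m+2) * pochQ (Y+1) m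
    = polBbar m 0 Y * pochQ (2*Y+1) (2*m+1) * pochQ (2*Y+1) 2 * pochQ (Y+2) m := by
  intro m
  induction m using Nat.strong_induction_on with
  | _ m IH =>
    match m with
    | 0 =>
      intro Y hY
      have h1 : polBbar 0 0 (Y+1) = 1 := by
        rw [polBbar_zero]
        rw [angleQ_neg _ (by norm_num : ((0:ℕ):ℤ) - 1 < 0),
            angleQ_neg _ (by norm_num : ((0:ℕ):ℤ) - 2 < 0)]
        norm_num
      have h2 : polBbar 0 0 Y = 1 := by
        rw [polBbar_zero]
        rw [angleQ_neg _ (by norm_num : ((0:ℕ):ℤ) - 1 < 0),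
            angleQ_neg _ (by norm_num : ((0:ℕ):ℤ) - 2 < 0)]
        norm_num
      rw [h1, h2]
      norm_num [pochQ_zero]
    | 1 =>
      intro Y hY
      have e0 : ((1:ℕ):ℤ) - 1 = 0 := by norm_num
      have h1 : polBbar 1 0 (Y+1) = Y+2 := by
        rw [polBbar_zero, e0, angleQ_zero, angleQ_neg _ (by norm_num : ((1:ℕ):ℤ) - 2 < 0)]
        ring
      have h2 : polBbar 1 0 Y = Y+1 := by
        rw [polBbar_zero, e0, angleQ_zero, angleQ_neg _ (by norm_num : ((1:ℕ):ℤ) - 2 < 0)]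
        ring
      rw [h1, h2]
      have e1 : pochQ (Y+1) 1 = Y+1 := by simp [pochQ]
      have e2 : pochQ (Y+2) 1 = Y+2 := by simp [pochQ]
      rw [e1, e2]
      ring
    | (M+2) =>
      intro Y hY
      have ih := IH M (by omega) (Y+1) (by linarith)
      -- expand polBbar's
      have E1 : polBbar (M+2) 0 (Y+1)
          = pochQ (Y+2) (M+2) * pochQ (Y+5/2) (M+1)
            * angleQ (Y+3) ((M:ℤ)-1) * angleQ (Y+7/2) ((M:ℤ)-2) := by
        rw [polBbar_zero,
            show ((M+2:ℕ):ℤ) - 1 = ((M:ℤ) - 1) + 2 from by push_cast; ring,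
            show ((M+2:ℕ):ℤ) - 2 = ((M:ℤ) - 2) + 2 from by push_cast; ring,
            angle_rec _ _ (by omega), angle_rec _ _ (by omega),
            show (((M:ℤ)-1)+3).toNat = M+2 from by omega,
            show (((M:ℤ)-2)+3).toNat = M+1 from by omega,
            show (Y+1+1 : ℚ) = Y+2 from by ring, show (Y+2+1 : ℚ) = Y+3 from by ring,
            show (Y+1+3/2 : ℚ) = Y+5/2 from by ring, show (Y+5/2+1 : ℚ) = Y+7/2 from by ring]
        ring
      have E2 : polBbar (M+2) 0 Y
          = pochQ (Y+1) (M+2) * pochQ (Y+3/2) (M+1)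
            * angleQ (Y+2) ((M:ℤ)-1) * angleQ (Y+5/2) ((M:ℤ)-2) := by
        rw [polBbar_zero,
            show ((M+2:ℕ):ℤ) - 1 = ((M:ℤ) - 1) + 2 from by push_cast; ring,
            show ((M+2:ℕ):ℤ) - 2 = ((M:ℤ) - 2) + 2 from by push_cast; ring,
            angle_rec _ _ (by omega), angle_rec _ _ (by omega),
            show (((M:ℤ)-1)+3).toNat = M+2 from by omega,
            show (((M:ℤ)-2)+3).toNat = M+1 from by omega,
            show (Y+1+1 : ℚ) = Y+2 from by ring,
            show (Y+3/2+1 : ℚ) = Y+5/2 from by ring]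
        ring
      -- normalize ih
      rw [polBbar_zero, polBbar_zero,
          show (Y+1+1 : ℚ) = Y+2 from by ring,
          show (Y+2+1 : ℚ) = Y+3 from by ring,
          show (Y+2+3/2 : ℚ) = Y+7/2 from by ring,
          show (Y+1+3/2 : ℚ) = Y+5/2 from by ring,
          show (2*(Y+1)+1 : ℚ) = 2*Y+3 from by ring,
          show (Y+1+2 : ℚ) = Y+3 from by ring] at ih
      -- index splits
      have E3 : pochQ (2*Y+1) (M+3) = pochQ (2*Y+1) 2 * pochQ (2*Y+3) (M+1) := by
        have h := pochQ_add (2*Y+1) 2 (M+1)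
        rw [show 2+(M+1) = M+3 from by omega,
            show (2*Y+1+((2:ℕ):ℚ)) = 2*Y+3 from by push_cast; ring] at h
        exact h
      have E4 : pochQ (2*Y+1) (M+4) = pochQ (2*Y+1) 2 * pochQ (2*Y+3) (M+2) := by
        have h := pochQ_add (2*Y+1) 2 (M+2)
        rw [show 2+(M+2) = M+4 from by omega,
            show (2*Y+1+((2:ℕ):ℚ)) = 2*Y+3 from by push_cast; ring] at h
        exact h
      have E6 : pochQ (2*Y+1) (2*M+5)
          = pochQ (2*Y+1) 2 * (pochQ (2*Y+3) (2*M+1) * ((2*Y+2*(M:ℚ)+4)*(2*Y+2*(M:ℚ)+5))) := by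
        have h := pochQ_add (2*Y+1) 2 (2*M+3)
        rw [show 2+(2*M+3) = 2*M+5 from by omega,
            show (2*Y+1+((2:ℕ):ℚ)) = 2*Y+3 from by push_cast; ring] at h
        have h2 := pochQ_add (2*Y+3) (2*M+1) 2
        rw [show 2*M+1+2 = 2*M+3 from by omega, pochQ_two] at h2
        rw [h, h2]
        push_cast
        ring
      have E5 : pochQ (Y+1) (M+2) = (Y+1) * (pochQ (Y+2) M * (Y+2+(M:ℚ))) := by
        have h := pochQ_succ' (Y+1) (M+1)
        rw [pochQ_succ (Y+1+1) M, show (Y+1+1 : ℚ) = Y+2 from by ring] at h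
        exact h
      have E7 : pochQ (Y+2) (M+2) = (Y+2) * (pochQ (Y+3) M * (Y+3+(M:ℚ))) := by
        have h := pochQ_succ' (Y+2) (M+1)
        rw [pochQ_succ (Y+2+1) M, show (Y+2+1 : ℚ) = Y+3 from by ring] at h
        exact h
      have E8 : pochQ (Y+3) M * (Y+2) = pochQ (Y+2) M * (Y+2+(M:ℚ)) := by
        have h := pochQ_ratio (Y+2) M
        rw [show (Y+2+1 : ℚ) = Y+3 from by ring] at h
        exact h
      have E9 : pochQ (Y+5/2) (M+1) * (Y+3/2) = pochQ (Y+3/2) (M+1) * (Y+5/2+(M:ℚ)) := by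
        have h := pochQ_ratio (Y+3/2) (M+1)
        rw [show (Y+3/2+1 : ℚ) = Y+5/2 from by ring,
            show (Y+3/2+((M+1:ℕ):ℚ)) = Y+5/2+(M:ℚ) from by push_cast; ring] at h
        exact h
      have E10 : pochQ (2*Y+3) 2 = (2*Y+3)*(2*Y+4) := by rw [pochQ_two]; ring
      rw [E10] at ih
      rw [show M+2+1 = M+3 from by omega, show M+2+2 = M+4 from by omega,
          show 2*(M+2)+1 = 2*M+5 from by omega,
          E1, E2, E3, E4, E5, E6, E7]
      apply mul_right_cancel₀ (show ((Y+2)*(Y+3/2) : ℚ) ≠ 0 from by positivity)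
      set a1 := angleQ (Y+3) ((M:ℤ)-1)
      set a2 := angleQ (Y+7/2) ((M:ℤ)-2)
      set b1 := angleQ (Y+2) ((M:ℤ)-1)
      set b2 := angleQ (Y+5/2) ((M:ℤ)-2)
      set Pa := pochQ (2*Y+3) (M+1)
      set Pb := pochQ (2*Y+3) (M+2)
      set Pc := pochQ (Y+2) M
      set Pd := pochQ (Y+3) M
      set Pe := pochQ (2*Y+3) (2*M+1)
      set Pf := pochQ (Y+5/2) (M+1)
      set Pg := pochQ (Y+3/2) (M+1)
      set q2 := pochQ (2*Y+1) 2
      linear_combination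
        (((Y+2)*(Y+(M:ℚ)+3)*(Y+1)*(Y+(M:ℚ)+2)*q2^2)*Pd*Pf*(Y+2)*(Y+3/2)) * ih
        + (((Y+2)*(Y+(M:ℚ)+3)*(Y+1)*(Y+(M:ℚ)+2)*q2^2)*b1*b2*Pe*Pd*(2*Y+3)*(2*Y+4)*Pf*(Y+3/2)) * E8
        + (((Y+2)*(Y+(M:ℚ)+3)*(Y+1)*(Y+(M:ℚ)+2)*q2^2)*b1*b2*Pe*Pd*(2*Y+3)*(2*Y+4)*Pc*(Y+(M:ℚ)+2)) * E9

lemma KL3 (m : ℕ) : ∀ n : ℕ, ∀ Y : ℚ, 0 ≤ Y →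
    polBbar m n (Y+1) * pochQ (2*Y+1) (m+n+1) * pochQ (2*Y+1) (m+n+2)
      * pochQ (Y+1) m * pochQ (Y+1) n
    = polBbar m n Y * pochQ (2*Y+1) (2*m+1) * pochQ (2*Y+1) (2*n+2)
      * pochQ (Y+(n:ℚ)+2) m * pochQ (Y+(m:ℚ)+2) n := by
  intro n
  induction n with
  | zero =>
    intro Y hY
    rw [show m+0+1 = m+1 from by omega, show m+0+2 = m+2 from by omega,
        show 2*0+2 = 2 from by omega, pochQ_zero, pochQ_zero,
        show (Y+((0:ℕ):ℚ)+2) = Y+2 from by push_cast; ring]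
    have := KL0 m Y hY
    linarith [this]
  | succ n ih =>
    intro Y hY
    have ihY := ih Y hY
    -- recurrences for polBbar
    have R1 := polBbar_rec m n (Y+1)
    rw [show (Y+1+(m:ℚ)+1+(n:ℚ)) = Y+(m:ℚ)+(n:ℚ)+2 from by ring,
        show (2*(Y+1)+(m:ℚ)+(n:ℚ)+2) = 2*Y+(m:ℚ)+(n:ℚ)+4 from by ring] at R1
    have R0 := polBbar_rec m n Y
    -- convert the inner product of R1 into shifted form
    set hfun : ℕ → ℚ := fun i => (Y+(i:ℚ)+(n:ℚ)) / (Y+(i:ℚ)+(n:ℚ)+1/2) with hfun_def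
    have Tconv : (∏ i ∈ Finset.Icc 1 m, ((Y+1+(i:ℚ)+(n:ℚ)) / (Y+1+(i:ℚ)+(n:ℚ)+1/2)))
        = ∏ i ∈ Finset.Icc 1 m, hfun (i+1) := by
      apply Finset.prod_congr rfl
      intro i _
      simp only [hfun_def]
      rw [show (Y+((i+1:ℕ):ℚ)+(n:ℚ)) = Y+1+(i:ℚ)+(n:ℚ) from by push_cast; ring]
    rw [Tconv] at R1
    have T0conv : (∏ i ∈ Finset.Icc 1 m, ((Y+(i:ℚ)+(n:ℚ)) / (Y+(i:ℚ)+(n:ℚ)+1/2)))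
        = ∏ i ∈ Finset.Icc 1 m, hfun i := by
      apply Finset.prod_congr rfl
      intro i _
      simp only [hfun_def]
    rw [T0conv] at R0
    -- telescoping
    have h1v : hfun 1 = (Y+(n:ℚ)+1)/(Y+(n:ℚ)+3/2) := by
      simp only [hfun_def]
      rw [show (Y+((1:ℕ):ℚ)+(n:ℚ)) = Y+(n:ℚ)+1 from by push_cast; ring,
          show (Y+(n:ℚ)+1+1/2) = Y+(n:ℚ)+3/2 from by ring]
    have hm1v : hfun (m+1) = (Y+(m:ℚ)+(n:ℚ)+1)/(Y+(m:ℚ)+(n:ℚ)+3/2) := by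
      simp only [hfun_def]
      rw [show (Y+((m+1:ℕ):ℚ)+(n:ℚ)) = Y+(m:ℚ)+(n:ℚ)+1 from by push_cast; ring,
          show (Y+(m:ℚ)+(n:ℚ)+1+1/2) = Y+(m:ℚ)+(n:ℚ)+3/2 from by ring]
    have hb : (Y+(n:ℚ)+3/2) ≠ 0 := by positivity
    have hd : (Y+(m:ℚ)+(n:ℚ)+3/2) ≠ 0 := by positivity
    have Trel : (∏ i ∈ Finset.Icc 1 m, hfun (i+1)) * ((Y+(n:ℚ)+1)*(Y+(m:ℚ)+(n:ℚ)+3/2))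
        = (∏ i ∈ Finset.Icc 1 m, hfun i) * ((Y+(m:ℚ)+(n:ℚ)+1)*(Y+(n:ℚ)+3/2)) := by
      have t := tel_ratio hfun m
      rw [h1v, hm1v, ← mul_div_assoc, ← mul_div_assoc, div_eq_div_iff hb hd] at t
      linear_combination t
    -- splitting lemmas
    have S1 : pochQ (2*Y+1) (m+n+3)
        = pochQ (2*Y+1) (m+n+1) * ((2*Y+(m:ℚ)+(n:ℚ)+2)*(2*Y+(m:ℚ)+(n:ℚ)+3)) := by
      have h := pochQ_add (2*Y+1) (m+n+1) 2
      rw [show m+n+1+2 = m+n+3 from by omega, pochQ_two] at h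
      push_cast at h
      rw [h]; ring
    have S2 : pochQ (Y+1) (n+1) = pochQ (Y+1) n * (Y+(n:ℚ)+1) := by
      rw [pochQ_succ]; ring
    have S3 : ((2*Y+(m:ℚ)+(n:ℚ)+2)*(2*Y+(m:ℚ)+(n:ℚ)+3)) * pochQ (2*Y+(m:ℚ)+(n:ℚ)+4) (m+n+1)
        = pochQ (2*Y+(m:ℚ)+(n:ℚ)+2) (m+n+1)
          * ((2*Y+2*(m:ℚ)+2*(n:ℚ)+3)*(2*Y+2*(m:ℚ)+2*(n:ℚ)+4)) := by
      have h1 := pochQ_add (2*Y+(m:ℚ)+(n:ℚ)+2) 2 (m+n+1)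
      have h2 := pochQ_add (2*Y+(m:ℚ)+(n:ℚ)+2) (m+n+1) 2
      rw [show (2:ℕ)+(m+n+1) = m+n+3 from by omega, pochQ_two] at h1
      rw [show m+n+1+2 = m+n+3 from by omega, pochQ_two] at h2
      push_cast at h1 h2
      rw [show (2*Y+(m:ℚ)+(n:ℚ)+2+2) = 2*Y+(m:ℚ)+(n:ℚ)+4 from by ring] at h1
      linear_combination h2 - h1
    have S4 : pochQ (2*Y+1) (2*n+4)
        = pochQ (2*Y+1) (2*n+2) * ((2*Y+2*(n:ℚ)+3)*(2*Y+2*(n:ℚ)+4)) := by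
      have h := pochQ_add (2*Y+1) (2*n+2) 2
      rw [show 2*n+2+2 = 2*n+4 from by omega, pochQ_two] at h
      push_cast at h
      rw [h]; ring
    have S5 : pochQ (Y+(m:ℚ)+2) (n+1) = pochQ (Y+(m:ℚ)+2) n * (Y+(m:ℚ)+(n:ℚ)+2) := by
      rw [pochQ_succ]; ring
    have S6 : pochQ (Y+(n:ℚ)+3) m * (Y+(n:ℚ)+2)
        = pochQ (Y+(n:ℚ)+2) m * (Y+(m:ℚ)+(n:ℚ)+2) := by
      have h := pochQ_ratio (Y+(n:ℚ)+2) m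
      rw [show (Y+(n:ℚ)+2+1) = Y+(n:ℚ)+3 from by ring] at h
      rw [h]; ring
    -- rewrite the goal
    rw [show m+(n+1)+1 = m+n+2 from by omega, show m+(n+1)+2 = m+n+3 from by omega,
        show 2*(n+1)+2 = 2*n+4 from by omega,
        show (Y+((n+1:ℕ):ℚ)+2) = Y+(n:ℚ)+3 from by push_cast; ring,
        R1, R0, S1, S2, S4, S5]
    apply mul_right_cancel₀
      (show ((Y+(n:ℚ)+2)*(Y+(m:ℚ)+(n:ℚ)+3/2) : ℚ) ≠ 0 from by positivity)
    set w := ((2:ℚ) ^ (m+n+1))⁻¹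
    set T1 := ∏ i ∈ Finset.Icc 1 m, hfun (i+1)
    set T0 := ∏ i ∈ Finset.Icc 1 m, hfun i
    set Bn1 := polBbar m n (Y+1)
    set Bn := polBbar m n Y
    set P4 := pochQ (2*Y+(m:ℚ)+(n:ℚ)+4) (m+n+1)
    set P2 := pochQ (2*Y+(m:ℚ)+(n:ℚ)+2) (m+n+1)
    set Pmn1 := pochQ (2*Y+1) (m+n+1)
    set Pmn2 := pochQ (2*Y+1) (m+n+2)
    set Pm := pochQ (Y+1) m
    set Pn := pochQ (Y+1) n
    set P2m1 := pochQ (2*Y+1) (2*m+1)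
    set P2n2 := pochQ (2*Y+1) (2*n+2)
    set Pn2m := pochQ (Y+(n:ℚ)+2) m
    set Pn3m := pochQ (Y+(n:ℚ)+3) m
    set Pm2n := pochQ (Y+(m:ℚ)+2) n
    linear_combination
      (w*(Y+(m:ℚ)+(n:ℚ)+2)*T1*(Y+(n:ℚ)+1)*(Y+(n:ℚ)+2)*(Y+(m:ℚ)+(n:ℚ)+3/2)
        *(Bn1*Pmn1*Pmn2*Pm*Pn)) * S3
      + (w*(Y+(m:ℚ)+(n:ℚ)+2)*P2*((2*Y+2*(m:ℚ)+2*(n:ℚ)+3)*(2*Y+2*(m:ℚ)+2*(n:ℚ)+4))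
          *(Y+(n:ℚ)+2)*(Bn1*Pmn1*Pmn2*Pm*Pn)) * Trel
      + (w*(Y+(m:ℚ)+(n:ℚ)+2)*P2*((2*Y+2*(m:ℚ)+2*(n:ℚ)+3)*(2*Y+2*(m:ℚ)+2*(n:ℚ)+4))
          *(Y+(n:ℚ)+2)*T0*(Y+(m:ℚ)+(n:ℚ)+1)*(Y+(n:ℚ)+3/2)) * ihY
      - (w*(Y+(m:ℚ)+1+(n:ℚ))*T0*P2*((2*Y+2*(n:ℚ)+3)*(2*Y+2*(n:ℚ)+4))
          *(Y+(m:ℚ)+(n:ℚ)+2)*(Y+(m:ℚ)+(n:ℚ)+3/2)*(Bn*P2m1*P2n2*Pm2n)) * S6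


/-- Lemma 4.6 (second part) of the paper, cross-multiplied: the ratio
`P̄_{𝐥,𝐪}(x+1)/P̄_{𝐥,𝐪}(x)` equals the explicit product of equation (4.14). -/
theorem polPbar_ratio (m n : ℕ) (l q : ℕ → ℕ)
    (hl : ∀ i j, 1 ≤ i → i < j → j ≤ m → l i < l j)
    (hq : ∀ i j, 1 ≤ i → i < j → j ≤ n → q i < q j)
    (hlpos : ∀ i, 1 ≤ i → i ≤ m → 1 ≤ l i)
    (hqpos : ∀ i, 1 ≤ i → i ≤ n → 1 ≤ q i)
    (hl0 : m = 0 → l m = 0)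
    (x : ℕ) :
    polPbar m n l q (l m) ((x : ℚ) + 1) *
        (Nat.factorial (2 * x + 2 * l m + n + 1 - m) : ℚ) *
        (Nat.factorial (2 * x + 2 * l m + n + 2 - m) : ℚ) *
        (∏ i ∈ Finset.Icc 1 m, ((x : ℚ) + l m - l i + 1)) *
        (∏ i ∈ Finset.Icc 1 n, ((x : ℚ) + l m - q i - m + n + 1)) =
      polPbar m n l q (l m) (x : ℚ) *
        (Nat.factorial (2 * x + 2 * l m + 1) : ℚ) *
        (Nat.factorial (2 * x + 2 * l m + 2 * n + 2 - 2 * m) : ℚ) *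
        (∏ i ∈ Finset.Icc 1 m, ((x : ℚ) + l m + l i - m + n + 1)) *
        (∏ i ∈ Finset.Icc 1 n, ((x : ℚ) + l m + q i + 1)) := by

  -- basic facts
  have hli : ∀ i, 1 ≤ i → i ≤ m → i ≤ l i := by
    intro i
    induction i with
    | zero => omega
    | succ k ihk =>
      intro _ h2
      rcases Nat.eq_zero_or_pos k with rfl | hk
      · exact hlpos 1 le_rfl h2
      · have h3 := ihk (by omega) (by omega)
        have h4 := hl k (k+1) (by omega) (by omega) h2
        omega
  have hqi : ∀ i, 1 ≤ i → i ≤ n → i ≤ q i := by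
    intro i
    induction i with
    | zero => omega
    | succ k ihk =>
      intro _ h2
      rcases Nat.eq_zero_or_pos k with rfl | hk
      · exact hqpos 1 le_rfl h2
      · have h3 := ihk (by omega) (by omega)
        have h4 := hq k (k+1) (by omega) (by omega) h2
        omega
  have hlm : m ≤ l m := by
    rcases Nat.eq_zero_or_pos m with rfl | hm
    · omega
    · exact hli m (by omega) le_rfl
  set Y : ℕ := x + l m - m with hYdef
  have hYc : ((Y:ℕ):ℚ) = (x:ℚ) + (l m : ℚ) - (m:ℚ) := by
    rw [hYdef]
    push_cast [Nat.cast_sub (by omega : m ≤ x + l m)]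
    ring
  -- rewrite factorial indices
  rw [show 2*x+2*l m+n+1-m = 2*Y+m+n+1 from by omega,
      show 2*x+2*l m+n+2-m = 2*Y+m+n+2 from by omega,
      show 2*x+2*l m+1 = 2*Y+2*m+1 from by omega,
      show 2*x+2*l m+2*n+2-2*m = 2*Y+2*n+2 from by omega]
  -- factorial conversions
  have mkF : ∀ c : ℕ, ((2*Y+c).factorial : ℚ)
      = ((2*Y).factorial : ℚ) * pochQ (2*((Y:ℕ):ℚ)+1) c := by
    intro c
    have h := fact_poch (2*Y) c
    rw [show ((2*Y:ℕ):ℚ) = 2*((Y:ℕ):ℚ) from by push_cast; ring] at h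
    exact h
  have F1 := mkF (m+n+1)
  have F2 := mkF (m+n+2)
  have F3 := mkF (2*m+1)
  have F4 := mkF (2*n+2)
  rw [show 2*Y+m+n+1 = 2*Y+(m+n+1) from by omega,
      show 2*Y+m+n+2 = 2*Y+(m+n+2) from by omega,
      show 2*Y+2*m+1 = 2*Y+(2*m+1) from by omega,
      show 2*Y+2*n+2 = 2*Y+(2*n+2) from by omega,
      F1, F2, F3, F4]
  simp only [polPbar]
  have ha1 : (x:ℚ)+1+(l m:ℚ)-(m:ℚ) = ((Y:ℕ):ℚ)+1 := by rw [hYc]; ring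
  have ha0 : (x:ℚ)+(l m:ℚ)-(m:ℚ) = ((Y:ℕ):ℚ) := by rw [hYc]
  rw [ha1, ha0]
  -- product relations
  have Drel1 :
      (∏ i ∈ Finset.Icc 1 m, ∏ j ∈ Finset.Icc i (l i - 1),
          (((x:ℚ)+1+(l m:ℚ)-(j:ℚ)) * (((Y:ℕ):ℚ)+1+(n:ℚ)+(j:ℚ)+1)))
        * ((∏ i ∈ Finset.Icc 1 m, ((x:ℚ)+(l m:ℚ)-(l i:ℚ)+1))
            * pochQ (((Y:ℕ):ℚ)+(n:ℚ)+2) m)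
      = (∏ i ∈ Finset.Icc 1 m, ∏ j ∈ Finset.Icc i (l i - 1),
          (((x:ℚ)+(l m:ℚ)-(j:ℚ)) * (((Y:ℕ):ℚ)+(n:ℚ)+(j:ℚ)+1)))
        * (pochQ (((Y:ℕ):ℚ)+1) m
            * (∏ i ∈ Finset.Icc 1 m, ((x:ℚ)+(l m:ℚ)+(l i:ℚ)-(m:ℚ)+(n:ℚ)+1))) := by
    have hpo1 : pochQ (((Y:ℕ):ℚ)+(n:ℚ)+2) m
        = ∏ i ∈ Finset.Icc 1 m, (((Y:ℕ):ℚ)+(n:ℚ)+1+(i:ℚ)) := by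
      rw [poch_Icc (((Y:ℕ):ℚ)+(n:ℚ)+1) m,
          show (((Y:ℕ):ℚ)+(n:ℚ)+1+1) = ((Y:ℕ):ℚ)+(n:ℚ)+2 from by ring]
    have hpo2 : pochQ (((Y:ℕ):ℚ)+1) m
        = ∏ i ∈ Finset.Icc 1 m, ((((Y:ℕ):ℚ)+(m:ℚ)+1)-(i:ℚ)) := by
      rw [poch_Icc_desc (((Y:ℕ):ℚ)+(m:ℚ)+1) m,
          show (((Y:ℕ):ℚ)+(m:ℚ)+1-(m:ℚ)) = ((Y:ℕ):ℚ)+1 from by ring]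
    rw [hpo1, hpo2, ← Finset.prod_mul_distrib, ← Finset.prod_mul_distrib,
        ← Finset.prod_mul_distrib, ← Finset.prod_mul_distrib]
    apply Finset.prod_congr rfl
    intro i hi
    have hi1 : 1 ≤ i := (Finset.mem_Icc.mp hi).1
    have him : i ≤ m := (Finset.mem_Icc.mp hi).2
    have hil : i ≤ l i := hli i hi1 him
    rw [hYc]
    have c1 : (∏ j ∈ Finset.Icc i (l i - 1),
          (((x:ℚ)+1+(l m:ℚ)-(j:ℚ)) * ((x:ℚ)+(l m:ℚ)-(m:ℚ)+1+(n:ℚ)+(j:ℚ)+1)))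
        = (∏ j ∈ Finset.Icc i (l i - 1), (((x:ℚ)+(l m:ℚ))+1-(j:ℚ)))
          * (∏ j ∈ Finset.Icc i (l i - 1), (((x:ℚ)+(l m:ℚ)-(m:ℚ)+(n:ℚ)+1)+1+(j:ℚ))) := by
      rw [← Finset.prod_mul_distrib]
      apply Finset.prod_congr rfl
      intro j _
      ring
    have c0 : (∏ j ∈ Finset.Icc i (l i - 1),
          (((x:ℚ)+(l m:ℚ)-(j:ℚ)) * ((x:ℚ)+(l m:ℚ)-(m:ℚ)+(n:ℚ)+(j:ℚ)+1)))
        = (∏ j ∈ Finset.Icc i (l i - 1), (((x:ℚ)+(l m:ℚ))-(j:ℚ)))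
          * (∏ j ∈ Finset.Icc i (l i - 1), (((x:ℚ)+(l m:ℚ)-(m:ℚ)+(n:ℚ)+1)+(j:ℚ))) := by
      rw [← Finset.prod_mul_distrib]
      apply Finset.prod_congr rfl
      intro j _
      ring
    rw [c1, c0]
    have td := tel_down ((x:ℚ)+(l m:ℚ)) i (l i) hi1 hil
    have tu := tel_up ((x:ℚ)+(l m:ℚ)-(m:ℚ)+(n:ℚ)+1) i (l i) hi1 hil
    linear_combination
      ((∏ j ∈ Finset.Icc i (l i - 1), (((x:ℚ)+(l m:ℚ)-(m:ℚ)+(n:ℚ)+1)+1+(j:ℚ)))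
        * (((x:ℚ)+(l m:ℚ)-(m:ℚ)+(n:ℚ)+1)+(i:ℚ))) * td
      + ((∏ j ∈ Finset.Icc i (l i - 1), (((x:ℚ)+(l m:ℚ))-(j:ℚ)))
        * (((x:ℚ)+(l m:ℚ))-(i:ℚ)+1)) * tu
  have Drel2 :
      (∏ i ∈ Finset.Icc 1 n, ∏ j ∈ Finset.Icc i (q i - 1),
          ((((Y:ℕ):ℚ)+1+(n:ℚ)-(j:ℚ)) * ((x:ℚ)+1+(l m:ℚ)+(j:ℚ)+1)))
        * ((∏ i ∈ Finset.Icc 1 n, ((x:ℚ)+(l m:ℚ)-(q i:ℚ)-(m:ℚ)+(n:ℚ)+1))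
            * pochQ (((Y:ℕ):ℚ)+(m:ℚ)+2) n)
      = (∏ i ∈ Finset.Icc 1 n, ∏ j ∈ Finset.Icc i (q i - 1),
          ((((Y:ℕ):ℚ)+(n:ℚ)-(j:ℚ)) * ((x:ℚ)+(l m:ℚ)+(j:ℚ)+1)))
        * (pochQ (((Y:ℕ):ℚ)+1) n
            * (∏ i ∈ Finset.Icc 1 n, ((x:ℚ)+(l m:ℚ)+(q i:ℚ)+1))) := by
    have hpo1 : pochQ (((Y:ℕ):ℚ)+(m:ℚ)+2) n
        = ∏ i ∈ Finset.Icc 1 n, (((Y:ℕ):ℚ)+(m:ℚ)+1+(i:ℚ)) := by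
      rw [poch_Icc (((Y:ℕ):ℚ)+(m:ℚ)+1) n,
          show (((Y:ℕ):ℚ)+(m:ℚ)+1+1) = ((Y:ℕ):ℚ)+(m:ℚ)+2 from by ring]
    have hpo2 : pochQ (((Y:ℕ):ℚ)+1) n
        = ∏ i ∈ Finset.Icc 1 n, ((((Y:ℕ):ℚ)+(n:ℚ)+1)-(i:ℚ)) := by
      rw [poch_Icc_desc (((Y:ℕ):ℚ)+(n:ℚ)+1) n,
          show (((Y:ℕ):ℚ)+(n:ℚ)+1-(n:ℚ)) = ((Y:ℕ):ℚ)+1 from by ring]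
    rw [hpo1, hpo2, ← Finset.prod_mul_distrib, ← Finset.prod_mul_distrib,
        ← Finset.prod_mul_distrib, ← Finset.prod_mul_distrib]
    apply Finset.prod_congr rfl
    intro i hi
    have hi1 : 1 ≤ i := (Finset.mem_Icc.mp hi).1
    have him : i ≤ n := (Finset.mem_Icc.mp hi).2
    have hil : i ≤ q i := hqi i hi1 him
    rw [hYc]
    have c1 : (∏ j ∈ Finset.Icc i (q i - 1),
          (((x:ℚ)+(l m:ℚ)-(m:ℚ)+1+(n:ℚ)-(j:ℚ)) * ((x:ℚ)+1+(l m:ℚ)+(j:ℚ)+1)))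
        = (∏ j ∈ Finset.Icc i (q i - 1), (((x:ℚ)+(l m:ℚ)-(m:ℚ)+(n:ℚ))+1-(j:ℚ)))
          * (∏ j ∈ Finset.Icc i (q i - 1), (((x:ℚ)+(l m:ℚ)+1)+1+(j:ℚ))) := by
      rw [← Finset.prod_mul_distrib]
      apply Finset.prod_congr rfl
      intro j _
      ring
    have c0 : (∏ j ∈ Finset.Icc i (q i - 1),
          (((x:ℚ)+(l m:ℚ)-(m:ℚ)+(n:ℚ)-(j:ℚ)) * ((x:ℚ)+(l m:ℚ)+(j:ℚ)+1)))
        = (∏ j ∈ Finset.Icc i (q i - 1), (((x:ℚ)+(l m:ℚ)-(m:ℚ)+(n:ℚ))-(j:ℚ)))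
          * (∏ j ∈ Finset.Icc i (q i - 1), (((x:ℚ)+(l m:ℚ)+1)+(j:ℚ))) := by
      rw [← Finset.prod_mul_distrib]
      apply Finset.prod_congr rfl
      intro j _
      ring
    rw [c1, c0]
    have td := tel_down ((x:ℚ)+(l m:ℚ)-(m:ℚ)+(n:ℚ)) i (q i) hi1 hil
    have tu := tel_up ((x:ℚ)+(l m:ℚ)+1) i (q i) hi1 hil
    linear_combination
      ((∏ j ∈ Finset.Icc i (q i - 1), (((x:ℚ)+(l m:ℚ)+1)+1+(j:ℚ)))
        * (((x:ℚ)+(l m:ℚ)+1)+(i:ℚ))) * td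
      + ((∏ j ∈ Finset.Icc i (q i - 1), (((x:ℚ)+(l m:ℚ)-(m:ℚ)+(n:ℚ))-(j:ℚ)))
        * (((x:ℚ)+(l m:ℚ)-(m:ℚ)+(n:ℚ))-(i:ℚ)+1)) * tu
  have hYpos : (0:ℚ) ≤ ((Y:ℕ):ℚ) := by positivity
  have KL := KL3 m n ((Y:ℕ):ℚ) hYpos
  apply mul_right_cancel₀
    (show (pochQ (((Y:ℕ):ℚ)+(n:ℚ)+2) m * pochQ (((Y:ℕ):ℚ)+(m:ℚ)+2) n : ℚ) ≠ 0 from by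
      have h1 := pochQ_pos (show (0:ℚ) < ((Y:ℕ):ℚ)+(n:ℚ)+2 from by positivity) m
      have h2 := pochQ_pos (show (0:ℚ) < ((Y:ℕ):ℚ)+(m:ℚ)+2 from by positivity) n
      positivity)
  set c := constCbar m n l q
  set B1 := polBbar m n (((Y:ℕ):ℚ)+1)
  set B0 := polBbar m n ((Y:ℕ):ℚ)
  set Fc := ((2*Y).factorial : ℚ)
  set P1 := pochQ (2*((Y:ℕ):ℚ)+1) (m+n+1)
  set P2 := pochQ (2*((Y:ℕ):ℚ)+1) (m+n+2)
  set P3 := pochQ (2*((Y:ℕ):ℚ)+1) (2*m+1)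
  set P4 := pochQ (2*((Y:ℕ):ℚ)+1) (2*n+2)
  set Qm := pochQ (((Y:ℕ):ℚ)+1) m
  set Qn := pochQ (((Y:ℕ):ℚ)+1) n
  set Wm := pochQ (((Y:ℕ):ℚ)+(n:ℚ)+2) m
  set Wn := pochQ (((Y:ℕ):ℚ)+(m:ℚ)+2) n
  set D11 := ∏ i ∈ Finset.Icc 1 m, ∏ j ∈ Finset.Icc i (l i - 1),
      (((x:ℚ)+1+(l m:ℚ)-(j:ℚ)) * (((Y:ℕ):ℚ)+1+(n:ℚ)+(j:ℚ)+1))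
  set D10 := ∏ i ∈ Finset.Icc 1 m, ∏ j ∈ Finset.Icc i (l i - 1),
      (((x:ℚ)+(l m:ℚ)-(j:ℚ)) * (((Y:ℕ):ℚ)+(n:ℚ)+(j:ℚ)+1))
  set D21 := ∏ i ∈ Finset.Icc 1 n, ∏ j ∈ Finset.Icc i (q i - 1),
      ((((Y:ℕ):ℚ)+1+(n:ℚ)-(j:ℚ)) * ((x:ℚ)+1+(l m:ℚ)+(j:ℚ)+1))
  set D20 := ∏ i ∈ Finset.Icc 1 n, ∏ j ∈ Finset.Icc i (q i - 1),
      ((((Y:ℕ):ℚ)+(n:ℚ)-(j:ℚ)) * ((x:ℚ)+(l m:ℚ)+(j:ℚ)+1))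
  set Pia := ∏ i ∈ Finset.Icc 1 m, ((x:ℚ)+(l m:ℚ)-(l i:ℚ)+1)
  set Pib := ∏ i ∈ Finset.Icc 1 n, ((x:ℚ)+(l m:ℚ)-(q i:ℚ)-(m:ℚ)+(n:ℚ)+1)
  set Pic := ∏ i ∈ Finset.Icc 1 m, ((x:ℚ)+(l m:ℚ)+(l i:ℚ)-(m:ℚ)+(n:ℚ)+1)
  set Pid := ∏ i ∈ Finset.Icc 1 n, ((x:ℚ)+(l m:ℚ)+(q i:ℚ)+1)
  linear_combination
    (c*Fc^2*B1*P1*P2*D21*Pib*Wn) * Drel1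
    + (c*Fc^2*B1*P1*P2*D10*Qm*Pic) * Drel2
    + (c*Fc^2*D10*Pic*D20*Pid) * KL
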